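/- Fix C2 > 0 and m1, m2 ∈ ℝ, and set |m| = √(m1² + m2²). Every global minimizer l* > 0 of g(l) = l⁻⁴ · (9 + exp(2l(l − 2m2)/C2) + exp(2l(l + √3·m1 + m2)/C2) + exp(2l(l − √3·m1 + m2)/C2)) over (0,∞) satisfies the sharper lower bound l* > (1/2)·(−|m| + √(4·C2 + |m|²)). -/

import Mathlib

open Real

/-- The (rescaled) variance `S(l; C2)` of the error on the estimate of `C2`,
as a function of the edge length `l`. -/
noncomputable def errVarC2 (C2 m1 m2 l : ℝ) : ℝ :=
  (l ^ 4)⁻¹ * (9 + Real.exp (2 * l * (l - 2 * m2) / C2)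
    + Real.exp (2 * l * (l + Real.sqrt 3 * m1 + m2) / C2)
    + Real.exp (2 * l * (l - Real.sqrt 3 * m1 + m2) / C2))

set_option maxHeartbeats 1000000 in
/-- Every global minimizer `l*` of `S(·; C2)` on `(0,∞)` satisfies the sharper
lower bound `l* > (1/2)(−|m| + √(4C2 + |m|²))`. -/
theorem errVarC2_minimizer_sharp_lower_bound (C2 m1 m2 lstar : ℝ) (hC2 : 0 < C2)
    (hlstar : 0 < lstar)
    (hmin : ∀ l : ℝ, 0 < l → errVarC2 C2 m1 m2 lstar ≤ errVarC2 C2 m1 m2 l) :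
    (1 / 2) * (-Real.sqrt (m1 ^ 2 + m2 ^ 2) +
      Real.sqrt (4 * C2 + (Real.sqrt (m1 ^ 2 + m2 ^ 2)) ^ 2)) < lstar := by
  by_contra hcon
  push_neg at hcon
  set s := Real.sqrt (m1 ^ 2 + m2 ^ 2) with hs_def
  set t := Real.sqrt (4 * C2 + s ^ 2) with ht_def
  have hs : 0 ≤ s := Real.sqrt_nonneg _
  have hs2 : s ^ 2 = m1 ^ 2 + m2 ^ 2 := Real.sq_sqrt (by positivity)
  have ht2 : t ^ 2 = 4 * C2 + s ^ 2 := Real.sq_sqrt (by positivity)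
  have hL : lstar ≤ (t - s) / 2 := by linarith
  -- quadratic bound
  have hquad : lstar ^ 2 + s * lstar ≤ C2 := by
    have h1 : (0:ℝ) ≤ ((t - s) / 2 - lstar) * ((t - s) / 2 + lstar + s) :=
      mul_nonneg (by linarith) (by linarith)
    nlinarith [h1, ht2]
  -- coefficient bounds
  have h3 : (Real.sqrt 3) ^ 2 = 3 := Real.sq_sqrt (by norm_num)
  have habs : ∀ c : ℝ, c ^ 2 ≤ 4 * (m1 ^ 2 + m2 ^ 2) → c ≤ 2 * s := by
    intro c hc
    have : |c| ≤ 2 * s := by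
      rw [← Real.sqrt_sq_eq_abs]
      calc Real.sqrt (c ^ 2) ≤ Real.sqrt ((2 * s) ^ 2) := by
            apply Real.sqrt_le_sqrt; nlinarith [hs2]
        _ = 2 * s := Real.sqrt_sq (by linarith)
    exact (le_abs_self c).trans this
  have hb1 : -(2 * m2) ≤ 2 * s := habs _ (by nlinarith)
  have hb2 : Real.sqrt 3 * m1 + m2 ≤ 2 * s := habs _ (by nlinarith [sq_nonneg (m1 - Real.sqrt 3 * m2)])
  have hb3 : -(Real.sqrt 3) * m1 + m2 ≤ 2 * s := habs _ (by nlinarith [sq_nonneg (m1 + Real.sqrt 3 * m2)])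
  -- derivatives
  have hlne : lstar ≠ 0 := ne_of_gt hlstar
  set E1 := Real.exp (2 * lstar * (lstar - 2 * m2) / C2) with hE1_def
  set E2 := Real.exp (2 * lstar * (lstar + Real.sqrt 3 * m1 + m2) / C2) with hE2_def
  set E3 := Real.exp (2 * lstar * (lstar - Real.sqrt 3 * m1 + m2) / C2) with hE3_def
  have hd1 : HasDerivAt (fun l : ℝ => Real.exp (2 * l * (l - 2 * m2) / C2))
      ((2 * (lstar - 2 * m2) + 2 * lstar) / C2 * E1) lstar := by
    have h := ((((hasDerivAt_id lstar).const_mul 2).mul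
      ((hasDerivAt_id lstar).sub_const (2 * m2))).div_const C2).exp
    exact h.congr_deriv (by rw [hE1_def, mul_comm]; congr 1; simp only [id, mul_one])
  have hd2 : HasDerivAt (fun l : ℝ => Real.exp (2 * l * (l + Real.sqrt 3 * m1 + m2) / C2))
      ((2 * (lstar + Real.sqrt 3 * m1 + m2) + 2 * lstar) / C2 * E2) lstar := by
    have h := ((((hasDerivAt_id lstar).const_mul 2).mul
      (((hasDerivAt_id lstar).add_const (Real.sqrt 3 * m1)).add_const m2)).div_const C2).exp
    exact h.congr_deriv (by rw [hE2_def, mul_comm]; congr 1; simp only [id, mul_one])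
  have hd3 : HasDerivAt (fun l : ℝ => Real.exp (2 * l * (l - Real.sqrt 3 * m1 + m2) / C2))
      ((2 * (lstar - Real.sqrt 3 * m1 + m2) + 2 * lstar) / C2 * E3) lstar := by
    have h := ((((hasDerivAt_id lstar).const_mul 2).mul
      (((hasDerivAt_id lstar).sub_const (Real.sqrt 3 * m1)).add_const m2)).div_const C2).exp
    exact h.congr_deriv (by rw [hE3_def, mul_comm]; congr 1; simp only [id, mul_one])
  have hF : HasDerivAt (fun l : ℝ => 9 + Real.exp (2 * l * (l - 2 * m2) / C2)
      + Real.exp (2 * l * (l + Real.sqrt 3 * m1 + m2) / C2)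
      + Real.exp (2 * l * (l - Real.sqrt 3 * m1 + m2) / C2))
      ((2 * (lstar - 2 * m2) + 2 * lstar) / C2 * E1
       + (2 * (lstar + Real.sqrt 3 * m1 + m2) + 2 * lstar) / C2 * E2
       + (2 * (lstar - Real.sqrt 3 * m1 + m2) + 2 * lstar) / C2 * E3) lstar :=
    ((hd1.const_add 9).add hd2).add hd3
  have hp : HasDerivAt (fun l : ℝ => (l ^ 4)⁻¹)
      (-(4 * lstar ^ 3) / (lstar ^ 4) ^ 2) lstar := by
    have h := (hasDerivAt_pow 4 lstar).inv (by positivity)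
    exact h.congr_deriv (by norm_num)
  set D := -(4 * lstar ^ 3) / (lstar ^ 4) ^ 2 * (9 + E1 + E2 + E3)
      + (lstar ^ 4)⁻¹ * ((2 * (lstar - 2 * m2) + 2 * lstar) / C2 * E1
       + (2 * (lstar + Real.sqrt 3 * m1 + m2) + 2 * lstar) / C2 * E2
       + (2 * (lstar - Real.sqrt 3 * m1 + m2) + 2 * lstar) / C2 * E3) with hD_def
  have hg : HasDerivAt (errVarC2 C2 m1 m2) D lstar := by
    have := hp.mul hF
    exact this
  have hloc : IsLocalMin (errVarC2 C2 m1 m2) lstar := by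
    filter_upwards [Ioi_mem_nhds hlstar] with l hl using hmin l hl
  have hDzero : D = 0 := by
    have := hloc.deriv_eq_zero
    rw [hg.deriv] at this
    exact this
  -- now show D < 0, contradiction
  have hE1p : 0 < E1 := Real.exp_pos _
  have hE2p : 0 < E2 := Real.exp_pos _
  have hE3p : 0 < E3 := Real.exp_pos _
  have hc1 : lstar * ((2 * (lstar - 2 * m2) + 2 * lstar) / C2) ≤ 4 := by
    rw [← mul_div_assoc, div_le_iff₀ hC2]
    nlinarith [hquad, mul_le_mul_of_nonneg_right hb1 hlstar.le]
  have hc2 : lstar * ((2 * (lstar + Real.sqrt 3 * m1 + m2) + 2 * lstar) / C2) ≤ 4 := by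
    rw [← mul_div_assoc, div_le_iff₀ hC2]
    nlinarith [hquad, mul_le_mul_of_nonneg_right hb2 hlstar.le]
  have hc3 : lstar * ((2 * (lstar - Real.sqrt 3 * m1 + m2) + 2 * lstar) / C2) ≤ 4 := by
    rw [← mul_div_assoc, div_le_iff₀ hC2]
    nlinarith [hquad, mul_le_mul_of_nonneg_right hb3 hlstar.le]
  have hkey : lstar ^ 5 * D =
      -36 + (lstar * ((2 * (lstar - 2 * m2) + 2 * lstar) / C2) - 4) * E1
      + (lstar * ((2 * (lstar + Real.sqrt 3 * m1 + m2) + 2 * lstar) / C2) - 4) * E2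
      + (lstar * ((2 * (lstar - Real.sqrt 3 * m1 + m2) + 2 * lstar) / C2) - 4) * E3 := by
    rw [hD_def]
    field_simp
    ring
  have ht1 : (lstar * ((2 * (lstar - 2 * m2) + 2 * lstar) / C2) - 4) * E1 ≤ 0 :=
    mul_nonpos_of_nonpos_of_nonneg (by linarith) hE1p.le
  have ht2' : (lstar * ((2 * (lstar + Real.sqrt 3 * m1 + m2) + 2 * lstar) / C2) - 4) * E2 ≤ 0 :=
    mul_nonpos_of_nonpos_of_nonneg (by linarith) hE2p.le
  have ht3 : (lstar * ((2 * (lstar - Real.sqrt 3 * m1 + m2) + 2 * lstar) / C2) - 4) * E3 ≤ 0 :=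
    mul_nonpos_of_nonpos_of_nonneg (by linarith) hE3p.le
  rw [hDzero, mul_zero] at hkey
  linarith
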